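/- Let H be an inner product space over ℂ, n ≥ 1, x₁,…,xₙ, y₁,…,yₙ ∈ H, ω ∈ ℝ, m ∈ {1,…,n}, a, b ∈ H, r, s ≥ 0. Suppose ‖xₖ − a‖ ≤ r and ‖exp(2ωimk)·yₖ − b‖ ≤ s for all k ∈ {1,…,n}. Define the discrete Fourier transform F_ω(y)(m) = ∑ₖ exp(2ωimk)·yₖ and F_ω(x,y)(m) = ∑ₖ exp(2ωimk)·⟨xₖ, yₖ⟩. Then ‖F_ω(x,y)(m) − ⟨(1/n)∑ₖ xₖ, F_ω(y)(m)⟩‖ ≤ n·r·s. -/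

import Mathlib

open scoped InnerProductSpace
open Finset

theorem fourier_gruss_approx {H : Type*} [NormedAddCommGroup H] [InnerProductSpace ℂ H]
    (n : ℕ) (hn : 1 ≤ n) (x y : ℕ → H) (ω : ℝ) (m : ℕ) (hm : m ∈ Finset.Icc 1 n)
    (a b : H) (r s : ℝ) (hr : 0 ≤ r) (hs : 0 ≤ s)
    (hx : ∀ k ∈ Finset.Icc 1 n, ‖x k - a‖ ≤ r)
    (hy : ∀ k ∈ Finset.Icc 1 n,
      ‖Complex.exp (2 * (ω : ℂ) * Complex.I * (m : ℂ) * (k : ℂ)) • y k - b‖ ≤ s) :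
    ‖(∑ k ∈ Finset.Icc 1 n, Complex.exp (2 * (ω : ℂ) * Complex.I * (m : ℂ) * (k : ℂ))
            * ⟪x k, y k⟫_ℂ
          - ⟪(1 / (n : ℂ)) • ∑ k ∈ Finset.Icc 1 n, x k,
              ∑ k ∈ Finset.Icc 1 n,
                Complex.exp (2 * (ω : ℂ) * Complex.I * (m : ℂ) * (k : ℂ)) • y k⟫_ℂ)‖
      ≤ (n : ℝ) * r * s := by
  set K := Finset.Icc 1 n with hK
  have hcard : K.card = n := by simp [hK]
  set e : ℕ → ℂ := fun k => Complex.exp (2 * (ω : ℂ) * Complex.I * (m : ℂ) * (k : ℂ)) with he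
  set z : ℕ → H := fun k => e k • y k with hz
  set xb : H := (1 / (n : ℂ)) • ∑ k ∈ K, x k with hxb
  have hn0 : (n : ℂ) ≠ 0 := Nat.cast_ne_zero.mpr (by omega)
  have hzero : ∑ k ∈ K, (x k - xb) = 0 := by
    rw [Finset.sum_sub_distrib, Finset.sum_const, hcard, sub_eq_zero, hxb,
      ← Nat.cast_smul_eq_nsmul ℂ, smul_smul]
    rw [mul_one_div, div_self hn0, one_smul]
  have key : (∑ k ∈ K, e k * ⟪x k, y k⟫_ℂ) - ⟪xb, ∑ k ∈ K, z k⟫_ℂ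
      = ∑ k ∈ K, ⟪x k - xb, z k - b⟫_ℂ := by
    have h1 : ∀ k, ⟪x k - xb, z k - b⟫_ℂ
        = (⟪x k, z k⟫_ℂ - ⟪xb, z k⟫_ℂ) - ⟪x k - xb, b⟫_ℂ := by
      intro k
      rw [inner_sub_right, inner_sub_left]
    rw [Finset.sum_congr rfl (fun k _ => h1 k), Finset.sum_sub_distrib,
      Finset.sum_sub_distrib, ← sum_inner, hzero, inner_zero_left, sub_zero, ← inner_sum]
    congr 1
    refine Finset.sum_congr rfl fun k _ => ?_
    rw [hz, inner_smul_right]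
  rw [key]
  have hb1 : ‖∑ k ∈ K, ⟪x k - xb, z k - b⟫_ℂ‖
      ≤ ∑ k ∈ K, ‖x k - xb‖ * ‖z k - b‖ := by
    refine le_trans ?_ (Finset.sum_le_sum fun k _ => norm_inner_le_norm (𝕜 := ℂ) _ _)
    exact norm_sum_le K fun k => ⟪x k - xb, z k - b⟫_ℂ
  have hvar : ∑ k ∈ K, ‖x k - xb‖ ^ 2 ≤ (n : ℝ) * r ^ 2 := by
    have h2 : ∀ k ∈ K, ‖x k - a‖ ^ 2
        = ‖x k - xb‖ ^ 2 + 2 * RCLike.re ⟪x k - xb, xb - a⟫_ℂ + ‖xb - a‖ ^ 2 := by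
      intro k _
      have hk : x k - a = (x k - xb) + (xb - a) := by abel
      rw [hk, norm_add_sq (𝕜 := ℂ)]
    have h3 : ∑ k ∈ K, ‖x k - a‖ ^ 2
        = (∑ k ∈ K, ‖x k - xb‖ ^ 2) + (n : ℝ) * ‖xb - a‖ ^ 2 := by
      rw [Finset.sum_congr rfl h2, Finset.sum_add_distrib, Finset.sum_add_distrib]
      have : ∑ k ∈ K, 2 * RCLike.re ⟪x k - xb, xb - a⟫_ℂ = 0 := by
        rw [← Finset.mul_sum, ← map_sum, ← sum_inner, hzero, inner_zero_left]
        simp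
      rw [this, add_zero, Finset.sum_const, hcard, nsmul_eq_mul]
    have h4 : ∑ k ∈ K, ‖x k - a‖ ^ 2 ≤ (n : ℝ) * r ^ 2 := by
      calc ∑ k ∈ K, ‖x k - a‖ ^ 2 ≤ ∑ k ∈ K, r ^ 2 := by
            refine Finset.sum_le_sum fun k hk => ?_
            exact pow_le_pow_left₀ (norm_nonneg _) (hx k hk) 2
        _ = (n : ℝ) * r ^ 2 := by rw [Finset.sum_const, hcard, nsmul_eq_mul]
    nlinarith [sq_nonneg ‖xb - a‖, (Nat.one_le_cast.mpr hn : (1:ℝ) ≤ (n:ℝ))]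
  have hsumnorm : ∑ k ∈ K, ‖x k - xb‖ ≤ (n : ℝ) * r := by
    have hcs : (∑ k ∈ K, ‖x k - xb‖) ^ 2 ≤ (K.card : ℝ) * ∑ k ∈ K, ‖x k - xb‖ ^ 2 :=
      sq_sum_le_card_mul_sum_sq
    rw [hcard] at hcs
    have hnn : (0:ℝ) ≤ ∑ k ∈ K, ‖x k - xb‖ :=
      Finset.sum_nonneg fun k _ => norm_nonneg _
    nlinarith [mul_nonneg (Nat.cast_nonneg (α := ℝ) n) hr, hvar, hcs, hnn,
      mul_le_mul_of_nonneg_left hvar (Nat.cast_nonneg (α := ℝ) n)]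
  have hb2 : ∑ k ∈ K, ‖x k - xb‖ * ‖z k - b‖ ≤ s * ∑ k ∈ K, ‖x k - xb‖ := by
    rw [Finset.mul_sum]
    refine Finset.sum_le_sum fun k hk => ?_
    rw [mul_comm s]
    exact mul_le_mul_of_nonneg_left (hy k hk) (norm_nonneg _)
  calc ‖∑ k ∈ K, ⟪x k - xb, z k - b⟫_ℂ‖
      ≤ ∑ k ∈ K, ‖x k - xb‖ * ‖z k - b‖ := hb1
    _ ≤ s * ∑ k ∈ K, ‖x k - xb‖ := hb2
    _ ≤ s * ((n : ℝ) * r) := by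
        exact mul_le_mul_of_nonneg_left hsumnorm hs
    _ = (n : ℝ) * r * s := by ring
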